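/- Let λ ≠ 1, α a positive integer, c ≠ 0, and define Frobenius–Euler polynomials H_n^{(α)}(x|λ) by ((1-λ)/(e^t-λ))^α e^{xt} = ∑ H_n^{(α)}(x|λ)t^n/n!, and Bernoulli polynomials of order a by (t/(e^t-1))^a e^{xt} = ∑ B_n^{(a)}(x)t^n/n!. For n ≥ 1, the polynomial Sₙ(x) := ((1-λ)/(e^t-λ))^α · x · (t(1+t)^c/log(1+t))^n x^{n-1} satisfies Sₙ(x) = ∑_{l=0}^{n-1} C(n-1,l) B_l^{(l-n+1)}(cn+1) H_{n-l}^{(α)}(x|λ). -/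

import Mathlib

open PowerSeries Nat

noncomputable section

/-- The exponential series `e^t ∈ ℚ[[t]]`. -/
def expS : PowerSeries ℚ := PowerSeries.exp ℚ

/-- `log(1+t) = ∑_{k≥1} (-1)^{k+1} t^k / k`. -/
def logS : PowerSeries ℚ := PowerSeries.mk fun k => if k = 0 then 0 else (-1 : ℚ)^(k+1) / k

/-- `log(1+t)/t = ∑_{k≥0} (-1)^k t^k/(k+1)`. -/
def LtS : PowerSeries ℚ := PowerSeries.mk fun k => (-1 : ℚ)^k / (k+1)

/-- `(e^{bt} - 1)/t`. -/
def ebt (b : ℚ) : PowerSeries ℚ := PowerSeries.mk fun m => b^(m+1) / (m+1)!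

/-- Falling factorial `(x)_m = x(x-1)⋯(x-m+1)`. -/
def ff (x : ℚ) (m : ℕ) : ℚ := ∏ i ∈ Finset.range m, (x - i)

/-- `(1+t)^x = ∑_m (x)_m t^m/m!`. -/
def onePlusPow (x : ℚ) : PowerSeries ℚ := PowerSeries.mk fun m => ff x m / m !

/-- Integer powers of a power series (negative powers via `PowerSeries.inv`). -/
def zp (f : PowerSeries ℚ) : ℤ → PowerSeries ℚ
  | Int.ofNat n => f ^ n
  | Int.negSucc n => f⁻¹ ^ (n + 1)

/-- Stirling numbers of the second kind. -/
def S2 : ℕ → ℕ → ℕ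
  | 0, 0 => 1
  | 0, _ + 1 => 0
  | _ + 1, 0 => 0
  | n + 1, k + 1 => (k + 1) * S2 n (k + 1) + S2 n k

/-- Signed Stirling numbers of the first kind: `(x)_n = ∑_l S1 n l • x^l`. -/
def S1 : ℕ → ℕ → ℤ
  | 0, 0 => 1
  | 0, _ + 1 => 0
  | _ + 1, 0 => 0
  | n + 1, k + 1 => S1 n k - n * S1 n (k + 1)

/-- Bernoulli polynomial of (integer) order `a` evaluated at `x`:
`(t/(e^t-1))^a e^{xt} = ∑_m Bpol a x m • t^m/m!`. -/
def Bpol (a : ℤ) (x : ℚ) (m : ℕ) : ℚ :=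
  m ! * PowerSeries.coeff m (zp (ebt 1)⁻¹ a * PowerSeries.rescale x expS)

/-- Bernoulli numbers of order `a`. -/
def Bnum (a : ℤ) (m : ℕ) : ℚ := Bpol a 0 m

/-- Narumi numbers: `(log(1+t)/t)^n = ∑_l Nnum n l • t^l/l!`. -/
def Nnum (n l : ℕ) : ℚ := l ! * PowerSeries.coeff l (LtS ^ n)

/-- Narumi polynomials of (integer) order `a`:
`(log(1+t)/t)^a (1+t)^x = ∑_l Npol a x l • t^l/l!`. -/
def Npol (a : ℤ) (x : ℚ) (l : ℕ) : ℚ :=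
  l ! * PowerSeries.coeff l (zp LtS a * onePlusPow x)

/-- Bernoulli polynomials of the second kind:
`t(1+t)^x/log(1+t) = ∑_m b2 x m • t^m/m!`. -/
def b2 (x : ℚ) (m : ℕ) : ℚ := m ! * PowerSeries.coeff m (onePlusPow x * LtS⁻¹)

/-- Poisson–Charlier polynomial `C_n(x;a)`. -/
def PC (n : ℕ) (x a : ℚ) : ℚ :=
  ∑ k ∈ Finset.range (n + 1), (n.choose k : ℚ) * (-1)^(n - k) * (a⁻¹)^k * ff x k

/-- Generalized binomial coefficient `C(x, m) = (x)_m/m!`. -/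
def gchoose (x : ℚ) (m : ℕ) : ℚ := ff x m / m !

/-- Action of a power series `f(t) = ∑ a_k t^k/k!` on a polynomial:
`f(t) p(x) = ∑_k a_k p^{(k)}(x)/k!` (a finite sum). -/
def act (f : PowerSeries ℚ) (p : Polynomial ℚ) : Polynomial ℚ :=
  ∑ k ∈ Finset.range (p.natDegree + 1),
    PowerSeries.coeff k f • (⇑Polynomial.derivative)^[k] p

/-- `e^{xt} ∈ (ℚ[x])[[t]]`. -/
def expPoly : PowerSeries (Polynomial ℚ) :=
  PowerSeries.mk fun k => ((k ! : ℚ)⁻¹) • Polynomial.X ^ k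

/-- The Sheffer polynomial sequence attached to an invertible series `f`:
`f(t) e^{xt} = ∑_n (polyOf f n) t^n/n!`. -/
def polyOf (f : PowerSeries ℚ) (n : ℕ) : Polynomial ℚ :=
  (n ! : ℚ) • PowerSeries.coeff n (PowerSeries.map Polynomial.C f * expPoly)

/-- `((1-λ)/(e^t-λ))^α`. -/
def FEser (lam : ℚ) (α : ℕ) : PowerSeries ℚ :=
  (PowerSeries.C (1 - lam) * (expS - PowerSeries.C lam)⁻¹) ^ α

/-- Frobenius–Euler polynomials of order `α`. -/
def FE (lam : ℚ) (α n : ℕ) : Polynomial ℚ := polyOf (FEser lam α) n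

/-- `(2/(e^t+1))^α`. -/
def Eser (α : ℕ) : PowerSeries ℚ := (PowerSeries.C (2 : ℚ) * (expS + 1)⁻¹) ^ α

/-- Euler polynomials of order `α`. -/
def Epol (α n : ℕ) : Polynomial ℚ := polyOf (Eser α) n

/-- `((1-λ)/(e^{(λ-1)t}-λ))^α`. -/
def Aser (lam : ℚ) (α : ℕ) : PowerSeries ℚ :=
  (PowerSeries.C (1 - lam) *
    (PowerSeries.rescale (lam - 1) expS - PowerSeries.C lam)⁻¹) ^ α

/-- Frobenius-type Eulerian polynomials of order `α`. -/
def Apol (lam : ℚ) (α n : ℕ) : Polynomial ℚ := polyOf (Aser lam α) n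

end


noncomputable section

lemma expS_def : expS = PowerSeries.exp ℚ := rfl

-- basic coeffs
lemma coeff_LtS (k : ℕ) : PowerSeries.coeff k LtS = (-1:ℚ)^k / (k+1) := coeff_mk _ _
lemma coeff_onePlusPow (x : ℚ) (m : ℕ) : PowerSeries.coeff m (onePlusPow x) = ff x m / m ! := coeff_mk _ _
lemma coeff_ebt (m : ℕ) : PowerSeries.coeff m (ebt 1) = 1 / (m+1)! := by
  simp [ebt, coeff_mk]
lemma constCoeff_LtS : PowerSeries.constantCoeff LtS = 1 := by
  simp [← PowerSeries.coeff_zero_eq_constantCoeff, coeff_LtS]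
lemma constCoeff_onePlusPow (x : ℚ) : PowerSeries.constantCoeff (onePlusPow x) = 1 := by
  simp [← PowerSeries.coeff_zero_eq_constantCoeff, coeff_onePlusPow, ff]
lemma constCoeff_ebt : PowerSeries.constantCoeff (ebt 1) = 1 := by
  simp [← PowerSeries.coeff_zero_eq_constantCoeff, coeff_ebt]

lemma ff_succ (x : ℚ) (m : ℕ) : ff x (m+1) = ff x m * (x - m) := Finset.prod_range_succ _ _
lemma ff_succ' (x : ℚ) (m : ℕ) : ff (x+1) (m+1) = (x+1) * ff x m := by
  rw [ff, Finset.prod_range_succ']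
  simp only [Nat.cast_zero, sub_zero]
  rw [mul_comm]
  congr 1
  apply Finset.prod_congr rfl
  intro i _
  push_cast; ring

lemma ff_zero_eq (m : ℕ) (hm : 1 ≤ m) : ff 0 m = 0 := by
  rw [ff]
  apply Finset.prod_eq_zero (Finset.mem_range.mpr hm)
  simp

lemma onePlusPow_zero : onePlusPow 0 = 1 := by
  ext m
  rcases m with _ | m
  · simp [coeff_onePlusPow, ff]
  · simp [coeff_onePlusPow, ff_zero_eq (m+1) (by omega)]

lemma onePlusPow_succ (x : ℚ) : onePlusPow (x+1) = (1 + PowerSeries.X) * onePlusPow x := by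
  ext m
  rw [add_mul, one_mul, map_add]
  rcases m with _ | m
  · simp [coeff_onePlusPow, ff]
  · rw [coeff_succ_X_mul, coeff_onePlusPow, coeff_onePlusPow, coeff_onePlusPow,
      ff_succ' x m, ff_succ x m]
    rw [Nat.factorial_succ]
    push_cast
    have hm : ((m:ℚ)+1) ≠ 0 := by positivity
    have hf : ((m !:ℚ)) ≠ 0 := by exact_mod_cast Nat.factorial_ne_zero m
    field_simp
    ring


-- ODE for onePlusPow
lemma onePlusPow_ode (x : ℚ) :
    (1 + PowerSeries.X) * (PowerSeries.derivative ℚ (onePlusPow x)) =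
      PowerSeries.C x * onePlusPow x := by
  ext m
  rw [add_mul, one_mul, map_add, coeff_C_mul, PowerSeries.coeff_derivative, coeff_onePlusPow,
    coeff_onePlusPow]
  have h2 : PowerSeries.coeff m (PowerSeries.X * PowerSeries.derivative ℚ (onePlusPow x))
      = ff x m / m ! * m := by
    rcases m with _ | m
    · simp
    · rw [coeff_succ_X_mul, PowerSeries.coeff_derivative, coeff_onePlusPow]
      push_cast; ring
  rw [h2, ff_succ]
  have hf : ((m !:ℚ)) ≠ 0 := by exact_mod_cast Nat.factorial_ne_zero m
  have hm : ((m:ℚ)+1) ≠ 0 := by positivity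
  rw [Nat.factorial_succ]
  push_cast
  field_simp
  ring

-- uniqueness of ODE solution
lemma ode_unique (x : ℚ) (f : PowerSeries ℚ)
    (h1 : PowerSeries.constantCoeff f = 1)
    (h2 : (1 + PowerSeries.X) * (PowerSeries.derivative ℚ f) = PowerSeries.C x * f) :
    f = onePlusPow x := by
  ext m
  induction m with
  | zero => simp [PowerSeries.coeff_zero_eq_constantCoeff, h1, constCoeff_onePlusPow]
  | succ m ih =>
    have e1 := congrArg (PowerSeries.coeff m) h2
    have e2 := congrArg (PowerSeries.coeff m) ((onePlusPow_ode x))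
    rw [add_mul, one_mul, map_add, coeff_C_mul, PowerSeries.coeff_derivative] at e1 e2
    have hx1 : PowerSeries.coeff m (PowerSeries.X * PowerSeries.derivative ℚ f)
        = PowerSeries.coeff m f * m := by
      rcases m with _ | m
      · simp
      · rw [coeff_succ_X_mul, PowerSeries.coeff_derivative]; push_cast; ring
    have hx2 : PowerSeries.coeff m (PowerSeries.X * PowerSeries.derivative ℚ (onePlusPow x))
        = PowerSeries.coeff m (onePlusPow x) * m := by
      rcases m with _ | m
      · simp
      · rw [coeff_succ_X_mul, PowerSeries.coeff_derivative]; push_cast; ring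
    rw [hx1, ih] at e1
    rw [hx2] at e2
    have hm : ((m:ℚ)+1) ≠ 0 := by positivity
    have key : PowerSeries.coeff (m+1) f * ((m:ℚ)+1) =
        PowerSeries.coeff (m+1) (onePlusPow x) * ((m:ℚ)+1) := by
      push_cast at e1 e2 ⊢
      linarith
    exact mul_right_cancel₀ hm key

lemma onePlusPow_add (x y : ℚ) : onePlusPow (x+y) = onePlusPow x * onePlusPow y := by
  symm
  apply ode_unique
  · rw [map_mul, constCoeff_onePlusPow, constCoeff_onePlusPow, mul_one]
  · have hd := Derivation.leibniz (PowerSeries.derivative ℚ) (onePlusPow x) (onePlusPow y)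
    rw [hd]
    rw [smul_eq_mul, smul_eq_mul, mul_add]
    have c1 : (1 + PowerSeries.X) * (onePlusPow x * PowerSeries.derivative ℚ (onePlusPow y))
        = onePlusPow x * (PowerSeries.C y * onePlusPow y) := by
      rw [← onePlusPow_ode y]; ring
    have c2 : (1 + PowerSeries.X) * (onePlusPow y * PowerSeries.derivative ℚ (onePlusPow x))
        = onePlusPow y * (PowerSeries.C x * onePlusPow x) := by
      rw [← onePlusPow_ode x]; ring
    rw [c1, c2, map_add]
    ring

lemma onePlusPow_pow (x : ℚ) (n : ℕ) : (onePlusPow x)^n = onePlusPow (x * n) := by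
  induction n with
  | zero => simp [onePlusPow_zero]
  | succ n ih =>
    rw [pow_succ, ih, ← onePlusPow_add]
    push_cast; ring_nf


-- derivative coefficient helper
lemma coeff_X_mul_derivative (f : PowerSeries ℚ) (l : ℕ) :
    PowerSeries.coeff l (PowerSeries.X * PowerSeries.derivative ℚ f)
      = l * PowerSeries.coeff l f := by
  rcases l with _ | l
  · simp
  · rw [coeff_succ_X_mul, PowerSeries.coeff_derivative]; push_cast; ring

-- (E)
lemma lemE : (1 + PowerSeries.X) * (LtS + PowerSeries.X * PowerSeries.derivative ℚ LtS) = 1 := by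
  have hM : ∀ m, PowerSeries.coeff m (LtS + PowerSeries.X * PowerSeries.derivative ℚ LtS)
      = (-1:ℚ)^m := by
    intro m
    rw [map_add, coeff_X_mul_derivative, coeff_LtS]
    have hm : ((m:ℚ)+1) ≠ 0 := by positivity
    field_simp
    ring
  ext m
  rw [add_mul, one_mul, map_add]
  rcases m with _ | m
  · simp [hM 0]
  · rw [coeff_succ_X_mul, hM, hM, PowerSeries.coeff_one]
    simp [pow_succ]

lemma LtS_mul_inv : LtS * LtS⁻¹ = 1 :=
  PowerSeries.mul_inv_cancel _ (by rw [constCoeff_LtS]; exact one_ne_zero)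

lemma constCoeff_LtS_inv : PowerSeries.constantCoeff LtS⁻¹ = 1 := by
  rw [PowerSeries.constantCoeff_inv, constCoeff_LtS]; norm_num

lemma one_add_X_mul_W : (1 + PowerSeries.X) * onePlusPow (-1) = 1 := by
  rw [← onePlusPow_succ]; norm_num [onePlusPow_zero]

-- (K')
lemma lemK :
    (1 + PowerSeries.X) * (LtS⁻¹ - PowerSeries.X * PowerSeries.derivative ℚ LtS⁻¹)
      = LtS⁻¹ * LtS⁻¹ := by
  have hu : LtS ≠ 0 := by
    intro h
    have := constCoeff_LtS
    rw [h] at this; simp at this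
  have huu : LtS * LtS ≠ 0 := mul_ne_zero hu hu
  apply mul_right_cancel₀ huu
  have hDuv : LtS * PowerSeries.derivative ℚ LtS⁻¹
      + LtS⁻¹ * PowerSeries.derivative ℚ LtS = 0 := by
    have h0 := congrArg (PowerSeries.derivative ℚ) LtS_mul_inv
    rw [Derivation.leibniz, smul_eq_mul, smul_eq_mul, Derivation.map_one_eq_zero] at h0
    linear_combination h0
  have key : (LtS⁻¹ - PowerSeries.X * PowerSeries.derivative ℚ LtS⁻¹) * (LtS * LtS)
      = LtS + PowerSeries.X * PowerSeries.derivative ℚ LtS := by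
    linear_combination (LtS + PowerSeries.X * PowerSeries.derivative ℚ LtS) * LtS_mul_inv
      - PowerSeries.X * LtS * hDuv
  calc (1 + PowerSeries.X) * (LtS⁻¹ - PowerSeries.X * PowerSeries.derivative ℚ LtS⁻¹) * (LtS * LtS)
      = (1 + PowerSeries.X) * ((LtS⁻¹ - PowerSeries.X * PowerSeries.derivative ℚ LtS⁻¹) * (LtS * LtS)) := by ring
    _ = 1 := by rw [key, lemE]
    _ = LtS⁻¹ * LtS⁻¹ * (LtS * LtS) := by
        rw [show LtS⁻¹ * LtS⁻¹ * (LtS * LtS) = (LtS * LtS⁻¹) * (LtS * LtS⁻¹) by ring,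
          LtS_mul_inv]; norm_num

lemma v_sub_X_Dv : LtS⁻¹ - PowerSeries.X * PowerSeries.derivative ℚ LtS⁻¹
    = onePlusPow (-1) * (LtS⁻¹ * LtS⁻¹) := by
  have := congrArg (fun z => onePlusPow (-1) * z) lemK
  rw [show onePlusPow (-1) * ((1 + PowerSeries.X) * (LtS⁻¹ - PowerSeries.X * PowerSeries.derivative ℚ LtS⁻¹))
      = ((1 + PowerSeries.X) * onePlusPow (-1)) * (LtS⁻¹ - PowerSeries.X * PowerSeries.derivative ℚ LtS⁻¹) by ring,
    one_add_X_mul_W, one_mul] at this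
  exact this

-- R1 coefficient form
lemma R1coeff (n l : ℕ) (hn : 2 ≤ n) :
    ((n:ℚ)-1) * PowerSeries.coeff l (onePlusPow (-1) * LtS⁻¹^n)
      = ((n:ℚ)-1-l) * PowerSeries.coeff l (LtS⁻¹^(n-1)) := by
  set v := LtS⁻¹ with hv
  set W := onePlusPow (-1) with hW
  set Dv := PowerSeries.derivative ℚ v with hDv
  have hWv : W * v^n = v^(n-1) - PowerSeries.X * (v^(n-2) * Dv) := by
    have h1 : v^n = v^(n-2) * (v * v) := by
      rw [show v * v = v^2 by ring, ← pow_add, show n-2+2 = n by omega]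
    have h2 : v^(n-2) * v = v^(n-1) := by
      rw [← pow_succ, show n-2+1 = n-1 by omega]
    calc W * v^n = v^(n-2) * (W * (v * v)) := by rw [h1]; ring
      _ = v^(n-2) * (v - PowerSeries.X * Dv) := by rw [← v_sub_X_Dv]
      _ = v^(n-2) * v - PowerSeries.X * (v^(n-2) * Dv) := by ring
      _ = v^(n-1) - PowerSeries.X * (v^(n-2) * Dv) := by rw [h2]
  have hXD : ((n:ℚ)-1) * PowerSeries.coeff l (PowerSeries.X * (v^(n-2) * Dv))
      = l * PowerSeries.coeff l (v^(n-1)) := by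
    have hd : PowerSeries.X * PowerSeries.derivative ℚ (v^(n-1))
        = (n-1 : ℕ) • (PowerSeries.X * (v^(n-2) * Dv)) := by
      rw [Derivation.leibniz_pow, show n-1-1 = n-2 by omega]
      rw [smul_eq_mul, nsmul_eq_mul, nsmul_eq_mul]
      ring
    have hder := coeff_X_mul_derivative (v^(n-1)) l
    rw [hd, map_nsmul, nsmul_eq_mul] at hder
    have hc : ((n-1 : ℕ) : ℚ) = (n:ℚ) - 1 := by
      have := Nat.cast_sub (by omega : 1 ≤ n) (R := ℚ)
      simpa using this
    rw [hc] at hder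
    linarith [hder]
  rw [hWv, map_sub]
  linear_combination -hXD

lemma lemK2 : ebt 1 + PowerSeries.X * PowerSeries.derivative ℚ (ebt 1)
    = 1 + PowerSeries.X * ebt 1 := by
  ext m
  rw [map_add, map_add, coeff_X_mul_derivative, coeff_ebt]
  rcases m with _ | m
  · simp [coeff_ebt]
  · rw [coeff_succ_X_mul, coeff_ebt, PowerSeries.coeff_one]
    simp only [Nat.cast_zero, if_neg (Nat.succ_ne_zero m)]
    have h1 : ((m+1)! : ℚ) ≠ 0 := by exact_mod_cast Nat.factorial_ne_zero (m+1)
    have h3 : ((m+1+1)! : ℚ) = ((m:ℚ)+2) * (m+1)! := by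
      push_cast [Nat.factorial_succ (m+1)]
      ring
    rw [h3]
    have hm2 : ((m:ℚ)+2) ≠ 0 := by positivity
    field_simp
    ring_nf
    simp
    ring

lemma K2coeff (k l : ℕ) (hk : 1 ≤ k) (hl : 1 ≤ l) :
    ((k:ℚ)+l) * PowerSeries.coeff l ((ebt 1)^k)
      = k * (PowerSeries.coeff l ((ebt 1)^(k-1)) + PowerSeries.coeff (l-1) ((ebt 1)^k)) := by
  set b := ebt 1 with hb
  have hser : (k:ℕ) • (b^k) + PowerSeries.X * PowerSeries.derivative ℚ (b^k)
      = (k:ℕ) • (b^(k-1)) + (k:ℕ) • (PowerSeries.X * b^k) := by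
    have hD : PowerSeries.derivative ℚ (b^k)
        = (k:ℕ) • (b^(k-1) * PowerSeries.derivative ℚ b) := by
      simp only [Derivation.leibniz_pow, smul_eq_mul, nsmul_eq_mul]
    have hbk : b^(k-1) * b = b^k := by
      rw [← pow_succ, show k-1+1 = k by omega]
    calc (k:ℕ) • (b^k) + PowerSeries.X * PowerSeries.derivative ℚ (b^k)
        = (k:ℕ) • (b^(k-1) * (b + PowerSeries.X * PowerSeries.derivative ℚ b)) := by
          rw [hD, nsmul_eq_mul, nsmul_eq_mul, nsmul_eq_mul, ← hbk]
          ring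
      _ = (k:ℕ) • (b^(k-1) * (1 + PowerSeries.X * b)) := by rw [lemK2]
      _ = (k:ℕ) • (b^(k-1)) + (k:ℕ) • (PowerSeries.X * b^k) := by
          rw [nsmul_eq_mul, nsmul_eq_mul, nsmul_eq_mul, ← hbk]
          ring
  have := congrArg (PowerSeries.coeff l) hser
  rw [map_add, map_add, map_nsmul, map_nsmul, map_nsmul, coeff_X_mul_derivative] at this
  rw [nsmul_eq_mul, nsmul_eq_mul, nsmul_eq_mul] at this
  have hX : PowerSeries.coeff l (PowerSeries.X * b^k) = PowerSeries.coeff (l-1) (b^k) := by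
    rcases l with _ | l
    · omega
    · rw [coeff_succ_X_mul]; rfl
  rw [hX] at this
  push_cast at this ⊢
  linarith

lemma coeff_one_add_X_mul (h : PowerSeries ℚ) (l : ℕ) (hl : 1 ≤ l) :
    PowerSeries.coeff l ((1 + PowerSeries.X) * h)
      = PowerSeries.coeff l h + PowerSeries.coeff (l-1) h := by
  rw [add_mul, one_mul, map_add]
  congr 1
  rcases l with _ | l
  · omega
  · rw [coeff_succ_X_mul]; rfl

lemma star (n : ℕ) : ∀ l ≤ n, PowerSeries.coeff l (onePlusPow (-1) * LtS⁻¹^(n+1))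
    = PowerSeries.coeff l ((ebt 1)^(n-l)) := by
  induction n with
  | zero =>
    intro l hl
    interval_cases l
    simp only [PowerSeries.coeff_zero_eq_constantCoeff, map_mul, map_pow,
      constCoeff_onePlusPow, constCoeff_LtS_inv, constCoeff_ebt]
    simp
  | succ n ih =>
    intro l hl
    rcases Nat.eq_zero_or_pos l with rfl | hlpos
    · simp only [PowerSeries.coeff_zero_eq_constantCoeff, map_mul, map_pow,
        constCoeff_onePlusPow, constCoeff_LtS_inv, constCoeff_ebt]
      simp
    · -- l ≥ 1
      have hP : PowerSeries.coeff l (LtS⁻¹^(n+1))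
          = PowerSeries.coeff l (onePlusPow (-1) * LtS⁻¹^(n+1))
            + PowerSeries.coeff (l-1) (onePlusPow (-1) * LtS⁻¹^(n+1)) := by
        have hrw : LtS⁻¹^(n+1) = (1 + PowerSeries.X) * (onePlusPow (-1) * LtS⁻¹^(n+1)) := by
          rw [← mul_assoc, one_add_X_mul_W, one_mul]
        rw [hrw, coeff_one_add_X_mul _ _ hlpos, ← hrw]
      have hR := R1coeff (n+2) l (by omega)
      rw [show (n+2)-1 = n+1 by omega] at hR
      push_cast at hR
      rcases Nat.lt_or_ge l (n+1) with hlt | hge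
      · -- 1 ≤ l ≤ n
        have hl1 : l ≤ n := by omega
        have hl2 : l - 1 ≤ n := by omega
        rw [hP, ih l hl1, ih (l-1) hl2] at hR
        have hK := K2coeff (n+1-l) l (by omega) hlpos
        have hc1 : ((n+1-l : ℕ) : ℚ) = (n:ℚ)+1-l := by
          push_cast [Nat.cast_sub (by omega : l ≤ n+1)]
          ring
        rw [hc1] at hK
        rw [show n+1-l-1 = n-l by omega] at hK
        rw [show n-(l-1) = n+1-l by omega] at hR
        have hne : ((n:ℚ)+1) ≠ 0 := by positivity
        have goal1 : ((n:ℚ)+1) * PowerSeries.coeff l (onePlusPow (-1) * LtS⁻¹^(n+2))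
            = ((n:ℚ)+1) * PowerSeries.coeff l ((ebt 1)^(n+1-l)) := by
          linear_combination hR - hK
        exact mul_left_cancel₀ hne goal1
      · -- l = n+1
        have hleq : l = n+1 := by omega
        subst hleq
        have hne : ((n:ℚ)+1) ≠ 0 := by positivity
        have hcoef : ((n:ℚ)+1) * PowerSeries.coeff (n+1) (onePlusPow (-1) * LtS⁻¹^(n+2)) = 0 := by
          push_cast at hR
          linear_combination hR
        have hcz := (mul_eq_zero.mp hcoef).resolve_left hne
        rw [show n+1+1 = n+2 by omega, hcz, show (n+1)-(n+1) = 0 by omega, pow_zero,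
          PowerSeries.coeff_one]
        simp


lemma coeff_expS (m : ℕ) : PowerSeries.coeff m expS = 1 / m ! := by
  rw [expS_def, PowerSeries.coeff_exp]
  simp

lemma expS_eq : expS = 1 + PowerSeries.X * ebt 1 := by
  ext m
  rcases m with _ | m
  · simp [coeff_expS]
  · rw [coeff_expS, map_add, coeff_succ_X_mul, coeff_ebt, PowerSeries.coeff_one]
    simp

def ffP (m : ℕ) : Polynomial ℚ := ∏ i ∈ Finset.range m, (Polynomial.X - Polynomial.C (i:ℚ))

lemma eval_ffP (m : ℕ) (y : ℚ) : (ffP m).eval y = ff y m := by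
  simp [ffP, ff, Polynomial.eval_prod]

def Fp (n l : ℕ) : Polynomial ℚ :=
  ∑ m ∈ Finset.range (l+1),
    Polynomial.C (PowerSeries.coeff (l-m) (LtS⁻¹^n) / m !) * ffP m

def Gp (n l : ℕ) : Polynomial ℚ :=
  ∑ m ∈ Finset.range (l+1),
    Polynomial.C (PowerSeries.coeff (l-m) ((ebt 1)^(n-1-l)) / m !) * (Polynomial.X + 1)^m

lemma evalFp (n l : ℕ) (y : ℚ) :
    (Fp n l).eval y = PowerSeries.coeff l (onePlusPow y * LtS⁻¹^n) := by
  rw [PowerSeries.coeff_mul, Finset.Nat.sum_antidiagonal_eq_sum_range_succ_mk, Fp]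
  rw [Polynomial.eval_finset_sum]
  apply Finset.sum_congr rfl
  intro m _
  simp only
  rw [Polynomial.eval_mul, Polynomial.eval_C, eval_ffP, coeff_onePlusPow]
  ring

lemma evalGp (n l : ℕ) (y : ℚ) :
    (Gp n l).eval y
      = PowerSeries.coeff l (PowerSeries.rescale (y+1) expS * (ebt 1)^(n-1-l)) := by
  rw [PowerSeries.coeff_mul, Finset.Nat.sum_antidiagonal_eq_sum_range_succ_mk, Gp]
  rw [Polynomial.eval_finset_sum]
  apply Finset.sum_congr rfl
  intro m _
  rw [Polynomial.eval_mul, Polynomial.eval_C, Polynomial.eval_pow, Polynomial.eval_add,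
    Polynomial.eval_X, Polynomial.eval_one, PowerSeries.coeff_rescale, coeff_expS]
  ring

lemma FGeq (n : ℕ) (hn : 1 ≤ n) : ∀ l, l ≤ n-1 → Fp n l = Gp n l := by
  intro l
  induction l with
  | zero =>
    intro _
    rw [Fp, Gp]
    rw [Finset.sum_range_one, Finset.sum_range_one]
    have h1 : PowerSeries.coeff 0 (LtS⁻¹^n) = 1 := by
      rw [PowerSeries.coeff_zero_eq_constantCoeff, map_pow, constCoeff_LtS_inv, one_pow]
    have h2 : PowerSeries.coeff 0 ((ebt 1)^(n-1-0)) = 1 := by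
      rw [PowerSeries.coeff_zero_eq_constantCoeff, map_pow, constCoeff_ebt, one_pow]
    rw [h1, h2]
    simp [ffP]
  | succ l ih =>
    intro hl
    have ihl : Fp n l = Gp n l := ih (by omega)
    have hd : Fp n (l+1) - Gp n (l+1) = 0 := by
      set D := Fp n (l+1) - Gp n (l+1) with hD
      have hstep : ∀ y : ℚ, D.eval (y+1) = D.eval y := by
        intro y
        have hF : (Fp n (l+1)).eval (y+1) - (Fp n (l+1)).eval y = (Fp n l).eval y := by
          rw [evalFp, evalFp, evalFp, onePlusPow_succ, mul_assoc,
            coeff_one_add_X_mul _ _ (by omega : 1 ≤ l+1)]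
          simp
        have hG : (Gp n (l+1)).eval (y+1) - (Gp n (l+1)).eval y = (Gp n l).eval y := by
          rw [evalGp, evalGp, evalGp]
          have hres : PowerSeries.rescale (y+1+1) expS
              = PowerSeries.rescale (y+1) expS * expS := by
            have := PowerSeries.exp_mul_exp_eq_exp_add (y+1) (1:ℚ)
            rw [PowerSeries.rescale_one] at this
            rw [expS_def, ← this]
            rfl
          have hexp : n-1-l = (n-1-(l+1)) + 1 := by omega
          rw [hres]
          nth_rewrite 2 [expS_eq]
          have hcalc : PowerSeries.rescale (y+1) expS * (1 + PowerSeries.X * ebt 1)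
                * (ebt 1)^(n-1-(l+1))
              = PowerSeries.rescale (y+1) expS * (ebt 1)^(n-1-(l+1))
                + PowerSeries.X * (PowerSeries.rescale (y+1) expS * (ebt 1)^(n-1-l)) := by
            rw [hexp, pow_succ]
            ring
          rw [hcalc, map_add]
          have hX : PowerSeries.coeff (l+1)
              (PowerSeries.X * (PowerSeries.rescale (y+1) expS * (ebt 1)^(n-1-l)))
              = PowerSeries.coeff l
                (PowerSeries.rescale (y+1) expS * (ebt 1)^(n-1-l)) := coeff_succ_X_mul _ _
          rw [hX]
          ring
        have h3 : (Fp n l).eval y = (Gp n l).eval y := by rw [ihl]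
        simp only [hD, Polynomial.eval_sub]
        linarith [hF, hG, h3]
      have hanchor : D.eval (-1) = 0 := by
        rw [hD, Polynomial.eval_sub, evalFp, evalGp]
        have hstar := star (n-1) (l+1) (by omega)
        rw [show (n-1)+1 = n by omega] at hstar
        rw [hstar]
        have : (-1:ℚ)+1 = 0 := by ring
        rw [this, PowerSeries.rescale_zero]
        simp [expS_def, PowerSeries.constantCoeff_exp]
      have hroots : ∀ j : ℕ, D.eval ((j:ℚ) - 1) = 0 := by
        intro j
        induction j with
        | zero => simpa using hanchor
        | succ j ihj =>
          have : ((j+1 : ℕ):ℚ) - 1 = ((j:ℚ) - 1) + 1 := by push_cast; ring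
          rw [this, hstep]
          exact ihj
      apply Polynomial.eq_zero_of_infinite_isRoot
      apply Set.infinite_of_injective_forall_mem
        (f := fun j : ℕ => (j:ℚ) - 1)
      · intro a b hab
        simp only [sub_left_inj, Nat.cast_inj] at hab
        exact hab
      · intro j
        simp only [Set.mem_setOf_eq, Polynomial.IsRoot]
        exact hroots j
    exact sub_eq_zero.mp hd



lemma keyCoeff (n l : ℕ) (hn : 1 ≤ n) (hl : l ≤ n-1) (c : ℚ) :
    PowerSeries.coeff l ((onePlusPow c * LtS⁻¹)^n)
      = PowerSeries.coeff l
          (PowerSeries.rescale (c*n+1) expS * (ebt 1)^(n-1-l)) := by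
  rw [mul_pow, onePlusPow_pow]
  have h := congrArg (Polynomial.eval (c*(n:ℚ))) (FGeq n hn l hl)
  rw [evalFp, evalGp] at h
  exact h

lemma ebt_inv_inv : ((ebt 1)⁻¹)⁻¹ = ebt 1 := by
  rw [PowerSeries.inv_eq_iff_mul_eq_one
    (by rw [PowerSeries.constantCoeff_inv, constCoeff_ebt]; norm_num)]
  exact PowerSeries.mul_inv_cancel _ (by rw [constCoeff_ebt]; exact one_ne_zero)

lemma zp_ebt (n l : ℕ) (hn : 1 ≤ n) (hl : l ≤ n-1) :
    zp (ebt 1)⁻¹ ((l:ℤ) - n + 1) = (ebt 1)^(n-1-l) := by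
  rcases h : n-1-l with _ | k
  · have hz : (l:ℤ) - n + 1 = Int.ofNat 0 := by
      simp only [Int.ofNat_eq_coe, Nat.cast_zero]
      omega
    rw [hz]
    show ((ebt 1)⁻¹)^0 = (ebt 1)^0
    simp
  · have hz : (l:ℤ) - n + 1 = Int.negSucc k := by
      rw [Int.negSucc_eq]
      push_cast
      omega
    rw [hz]
    show ((ebt 1)⁻¹)⁻¹^(k+1) = (ebt 1)^(k+1)
    rw [ebt_inv_inv]

lemma Bpol_eq (n l : ℕ) (hn : 1 ≤ n) (hl : l ≤ n-1) (c : ℚ) :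
    Bpol ((l:ℤ) - n + 1) (c*n+1) l
      = (l ! : ℚ) * PowerSeries.coeff l ((onePlusPow c * LtS⁻¹)^n) := by
  rw [Bpol, zp_ebt n l hn hl, keyCoeff n l hn hl c, mul_comm ((ebt 1)^(n-1-l))]

-- Step A machinery
lemma iter_deriv_sum {ι : Type*} (j : ℕ) (s : Finset ι) (g : ι → Polynomial ℚ) :
    (⇑Polynomial.derivative)^[j] (∑ i ∈ s, g i) = ∑ i ∈ s, (⇑Polynomial.derivative)^[j] (g i) := by
  induction j generalizing g with
  | zero => simp
  | succ j ih =>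
    rw [Function.iterate_succ_apply, Polynomial.derivative_sum]
    exact ih _

lemma act_eq_sum (f : PowerSeries ℚ) (p : Polynomial ℚ) (N : ℕ) (hN : p.natDegree ≤ N) :
    act f p = ∑ k ∈ Finset.range (N+1),
      PowerSeries.coeff k f • (⇑Polynomial.derivative)^[k] p := by
  rw [act]
  apply Finset.sum_subset
  · intro x hx
    simp only [Finset.mem_range] at *
    omega
  · intro x _ hx
    simp only [Finset.mem_range] at hx
    rw [Polynomial.iterate_derivative_eq_zero (by omega : p.natDegree < x), smul_zero]

lemma act_X_pow (f : PowerSeries ℚ) (m : ℕ) :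
    act f (Polynomial.X ^ m) = polyOf f m := by
  rw [act, Polynomial.natDegree_X_pow, polyOf]
  rw [PowerSeries.coeff_mul, Finset.Nat.sum_antidiagonal_eq_sum_range_succ_mk, Finset.smul_sum]
  apply Finset.sum_congr rfl
  intro k hk
  simp only [Finset.mem_range] at hk
  have hkm : k ≤ m := by omega
  rw [Polynomial.iterate_derivative_X_pow_eq_smul, PowerSeries.coeff_map, expPoly, coeff_mk]
  have hfac : ((m-k)! : ℚ) * (m.descFactorial k : ℚ) = (m ! : ℚ) := by
    exact_mod_cast congrArg (Nat.cast (R := ℚ)) (Nat.factorial_mul_descFactorial hkm)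
  have h1 : ((m-k)! : ℚ) ≠ 0 := by exact_mod_cast Nat.factorial_ne_zero (m-k)
  simp only [Polynomial.smul_eq_C_mul, ← map_mul, ← mul_assoc]
  congr 1
  rw [← hfac]
  congr 1
  field_simp

end

theorem stmt14 (lam : ℚ) (hlam : lam ≠ 1) (α : ℕ) (hα : 0 < α)
    (c : ℚ) (hc : c ≠ 0) (n : ℕ) (hn : 1 ≤ n) :
    act (FEser lam α)
        (Polynomial.X * act ((onePlusPow c * LtS⁻¹) ^ n) (Polynomial.X ^ (n - 1))) =
      ∑ l ∈ Finset.range n,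
        (((n - 1).choose l : ℚ) * Bpol ((l : ℤ) - n + 1) (c * n + 1) l) •
          FE lam α (n - l) := by
  set G := (onePlusPow c * LtS⁻¹) ^ n with hG
  set F := FEser lam α with hF
  have hq : act G (Polynomial.X ^ (n-1))
      = ∑ k ∈ Finset.range n,
          (PowerSeries.coeff k G * ((n-1).descFactorial k : ℚ)) • Polynomial.X ^ (n-1-k) := by
    rw [act, Polynomial.natDegree_X_pow, show n-1+1 = n by omega]
    apply Finset.sum_congr rfl
    intro k _
    rw [Polynomial.iterate_derivative_X_pow_eq_smul, smul_smul]
  have hXq : Polynomial.X * act G (Polynomial.X ^ (n-1))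
      = ∑ k ∈ Finset.range n,
          (PowerSeries.coeff k G * ((n-1).descFactorial k : ℚ)) • Polynomial.X ^ (n-k) := by
    rw [hq, Finset.mul_sum]
    apply Finset.sum_congr rfl
    intro k hk
    simp only [Finset.mem_range] at hk
    rw [mul_smul_comm, ← _root_.pow_succ', show n-1-k+1 = n-k by omega]
  have hdeg : (Polynomial.X * act G (Polynomial.X ^ (n-1))).natDegree ≤ n := by
    rw [hXq]
    apply Polynomial.natDegree_sum_le_of_forall_le
    intro k _
    refine le_trans (Polynomial.natDegree_smul_le _ _) ?_
    rw [Polynomial.natDegree_X_pow]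
    omega
  rw [act_eq_sum F _ n hdeg, hXq]
  have hstep1 : ∀ j, (⇑(Polynomial.derivative (R := ℚ)))^[j] (∑ k ∈ Finset.range n,
        (PowerSeries.coeff k G * ((n-1).descFactorial k : ℚ)) • Polynomial.X ^ (n-k))
      = ∑ k ∈ Finset.range n, (PowerSeries.coeff k G * ((n-1).descFactorial k : ℚ)) •
          (⇑(Polynomial.derivative (R := ℚ)))^[j] (Polynomial.X ^ (n-k)) := by
    intro j
    rw [iter_deriv_sum j (Finset.range n)
      (fun k => (PowerSeries.coeff k G * ((n-1).descFactorial k : ℚ)) • Polynomial.X ^ (n-k))]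
    apply Finset.sum_congr rfl
    intro k _
    rw [Polynomial.iterate_derivative_smul]
  have hswap : ∑ j ∈ Finset.range (n+1), PowerSeries.coeff j F •
        (⇑(Polynomial.derivative (R := ℚ)))^[j] (∑ k ∈ Finset.range n,
          (PowerSeries.coeff k G * ((n-1).descFactorial k : ℚ)) • Polynomial.X ^ (n-k))
      = ∑ k ∈ Finset.range n,
          (PowerSeries.coeff k G * ((n-1).descFactorial k : ℚ)) • act F (Polynomial.X ^ (n-k)) := by
    calc ∑ j ∈ Finset.range (n+1), PowerSeries.coeff j F •
        (⇑(Polynomial.derivative (R := ℚ)))^[j] (∑ k ∈ Finset.range n,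
          (PowerSeries.coeff k G * ((n-1).descFactorial k : ℚ)) • Polynomial.X ^ (n-k))
        = ∑ j ∈ Finset.range (n+1), ∑ k ∈ Finset.range n,
            (PowerSeries.coeff k G * ((n-1).descFactorial k : ℚ)) •
              (PowerSeries.coeff j F • (⇑(Polynomial.derivative (R := ℚ)))^[j] (Polynomial.X ^ (n-k))) := by
          apply Finset.sum_congr rfl
          intro j _
          rw [hstep1 j, Finset.smul_sum]
          apply Finset.sum_congr rfl
          intro k _
          rw [smul_comm]
      _ = ∑ k ∈ Finset.range n, ∑ j ∈ Finset.range (n+1),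
            (PowerSeries.coeff k G * ((n-1).descFactorial k : ℚ)) •
              (PowerSeries.coeff j F • (⇑(Polynomial.derivative (R := ℚ)))^[j] (Polynomial.X ^ (n-k))) :=
          Finset.sum_comm
      _ = ∑ k ∈ Finset.range n,
            (PowerSeries.coeff k G * ((n-1).descFactorial k : ℚ)) • act F (Polynomial.X ^ (n-k)) := by
          apply Finset.sum_congr rfl
          intro k _
          rw [← Finset.smul_sum, ← act_eq_sum F _ n (by rw [Polynomial.natDegree_X_pow]; omega)]
  rw [hswap]
  apply Finset.sum_congr rfl
  intro l hl
  simp only [Finset.mem_range] at hl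
  have hln : l ≤ n - 1 := by omega
  rw [act_X_pow]
  show (PowerSeries.coeff l G * ((n-1).descFactorial l : ℚ)) • FE lam α (n-l) = _
  congr 1
  rw [Bpol_eq n l hn hln c]
  have hdc : (n-1).descFactorial l = (n-1).choose l * l ! := by
    apply Nat.eq_of_mul_eq_mul_left (Nat.factorial_pos (n-1-l))
    rw [Nat.factorial_mul_descFactorial hln]
    rw [← Nat.choose_mul_factorial_mul_factorial hln]
    ring
  rw [hdc]
  push_cast
  ring
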